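/- Assume condition (RV) with α > 2 and assume the Chung–Lu degree hypothesis. Then P( for all i ∈ {1,…,n}, D_i(n) < W_{(i)}(n) + max(√(4·log(n)·W_{(i)}(n)), 4·log(n)) ) → 1 as n → ∞. -/

import Mathlib

open MeasureTheory ProbabilityTheory Filter Real
open scoped ENNReal

noncomputable section


/-- `F` is a continuous CDF supported on `(0, ∞)`. -/
def IsCDF (F : ℝ → ℝ) : Prop :=
  Monotone F ∧ Continuous F ∧ (∀ x ≤ (0:ℝ), F x = 0) ∧ Tendsto F atTop (nhds 1)

/-- Generalized inverse `F^←(y) = inf {x | F x ≥ y}`. -/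
noncomputable def Finv (F : ℝ → ℝ) (y : ℝ) : ℝ := sInf {x | y ≤ F x}

/-- `U(t) = F^←(1 - 1/t)`. -/
noncomputable def Ufun (F : ℝ → ℝ) (t : ℝ) : ℝ := Finv F (1 - 1/t)

/-- Condition (RV): regular variation of `U` with index `γ = 1/α`. -/
def CondRV (F : ℝ → ℝ) (α : ℝ) : Prop :=
  ∀ x : ℝ, 0 < x →
    Tendsto (fun t => Ufun F (t * x) / Ufun F t) atTop (nhds (x ^ (1/α)))

/-- Condition (UL) with parameters `t₀` and `η`. -/
def CondUL (F : ℝ → ℝ) (α t₀ η : ℝ) : Prop :=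
  0 < t₀ ∧ 0 ≤ η ∧ η < 1 ∧
  ∀ t ≥ t₀, ∀ x ≥ (1:ℝ), (1 - η) * x ^ (1/α) + η ≤ Ufun F (t * x) / Ufun F t

variable {Ω : Type*} [mΩ : MeasurableSpace Ω]

/-- `W 1, W 2, …` are i.i.d. with distribution function `F`. -/
def IIDWith (P : Measure Ω) (F : ℝ → ℝ) (W : ℕ → Ω → ℝ) : Prop :=
  (∀ i, Measurable (W i)) ∧
  iIndepFun W P ∧
  ∀ i (x : ℝ), P {ω | W i ω ≤ x} = ENNReal.ofReal (F x)

/-- `Wo n 1 ≥ Wo n 2 ≥ … ≥ Wo n n` are the decreasing order statistics of `W 1, …, W n`. -/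
def IsOrderStats (W : ℕ → Ω → ℝ) (Wo : ℕ → ℕ → Ω → ℝ) : Prop :=
  (∀ n i, Measurable (Wo n i)) ∧
  (∀ n (ω : Ω), ∀ i ∈ Finset.Icc 1 n, ∀ j ∈ Finset.Icc 1 n, i ≤ j → Wo n j ω ≤ Wo n i ω) ∧
  (∀ n (ω : Ω), (Finset.Icc 1 n).val.map (fun i => Wo n i ω)
      = (Finset.Icc 1 n).val.map (fun i => W i ω))

/-- The σ-algebra generated by the order statistics `(Wo n 1, …, Wo n n)`. -/
def weightSigma (Wo : ℕ → ℕ → Ω → ℝ) (n : ℕ) : MeasurableSpace Ω :=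
  MeasurableSpace.comap (fun ω (i : Fin n) => Wo n ((i : ℕ) + 1) ω) inferInstance

/-- Norros–Reittu degree hypothesis: conditionally on the weights, `D n i` is Poisson
with mean `Wo n i`. -/
def NorrosReittu (P : Measure Ω) (Wo : ℕ → ℕ → Ω → ℝ) (D : ℕ → ℕ → Ω → ℕ) : Prop :=
  (∀ n i, Measurable (D n i)) ∧
  ∀ n, ∀ i ∈ Finset.Icc 1 n, ∀ k : ℕ,
    (P[Set.indicator {ω | D n i ω = k} (fun _ => (1:ℝ)) | weightSigma Wo n]) =ᵐ[P]
      fun ω => Real.exp (-(Wo n i ω)) * (Wo n i ω)^k / (Nat.factorial k)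

/-- Chung–Lu degree hypothesis. -/
def ChungLu (P : Measure Ω) [IsFiniteMeasure P] [StandardBorelSpace Ω]
    (W : ℕ → Ω → ℝ) (Wo : ℕ → ℕ → Ω → ℝ)
    (A : ℕ → ℕ → ℕ → Ω → ℕ) (D : ℕ → ℕ → Ω → ℕ) : Prop :=
  (∀ n i j, Measurable (A n i j)) ∧
  (∀ n i j (ω : Ω), A n i j ω ≤ 1) ∧
  (∀ n i j (ω : Ω), A n j i ω = A n i j ω) ∧
  (∀ n i (ω : Ω), D n i ω = ∑ j ∈ Finset.Icc 1 n, A n i j ω) ∧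
  (∀ n (hle : weightSigma Wo n ≤ mΩ),
    iCondIndepFun (weightSigma Wo n) hle
      (fun (p : {p : ℕ × ℕ // p.1 ∈ Finset.Icc 1 n ∧ p.2 ∈ Finset.Icc 1 n ∧ p.1 ≤ p.2})
        (ω : Ω) => A n p.1.1 p.1.2 ω) P) ∧
  (∀ n, ∀ i ∈ Finset.Icc 1 n, ∀ j ∈ Finset.Icc 1 n, i ≤ j →
    (P[Set.indicator {ω | A n i j ω = 1} (fun _ => (1:ℝ)) | weightSigma Wo n]) =ᵐ[P]
      fun ω => min (Wo n i ω * Wo n j ω / (∑ l ∈ Finset.Icc 1 n, W l ω)) 1)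

/-- Decreasing order statistics for natural-number-valued degree sequences. -/
def IsOrderStatsN (D : ℕ → ℕ → Ω → ℕ) (Do : ℕ → ℕ → Ω → ℕ) : Prop :=
  (∀ n (ω : Ω), ∀ i ∈ Finset.Icc 1 n, ∀ j ∈ Finset.Icc 1 n, i ≤ j → Do n j ω ≤ Do n i ω) ∧
  (∀ n (ω : Ω), (Finset.Icc 1 n).val.map (fun i => Do n i ω)
      = (Finset.Icc 1 n).val.map (fun i => D n i ω))


/-- Chernoff bound for a finite family of {0,1}-valued random variables satisfying the
product rule for their level-1 events. -/
lemma bernoulli_chernoff {Ω : Type*} [MeasurableSpace Ω] (μ : Measure Ω) [IsProbabilityMeasure μ]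
    (J : Finset ℕ) (X : ℕ → Ω → ℕ) (hXm : ∀ j, Measurable (X j))
    (hX1 : ∀ j ω, X j ω ≤ 1) (p : ℕ → ℝ)
    (hind : ∀ S ⊆ J, (μ (⋂ j ∈ S, {ω | X j ω = 1})).toReal = ∏ j ∈ S, p j)
    (a lam : ℝ) (hlam : 0 ≤ lam) :
    (μ {ω | a ≤ ∑ j ∈ J, (X j ω : ℝ)}).toReal
      ≤ Real.exp (-lam * a + (Real.exp lam - 1) * ∑ j ∈ J, p j) := by
  classical
  set c : ℝ := Real.exp lam - 1 with hc_def
  have hc : 0 ≤ c := by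
    have := Real.one_le_exp hlam
    simp [hc_def]; linarith
  have hp : ∀ j ∈ J, 0 ≤ p j := by
    intro j hj
    have := hind {j} (by simpa using hj)
    simp at this
    rw [← this]
    exact ENNReal.toReal_nonneg
  have hBm : ∀ j, MeasurableSet {ω | X j ω = 1} := fun j =>
    hXm j (measurableSet_singleton 1)
  -- the indicator functions
  set χ : ℕ → Ω → ℝ := fun j => Set.indicator {ω | X j ω = 1} (fun _ => (1:ℝ)) with hχ_def
  have hχ01 : ∀ j ω, χ j ω = 0 ∨ χ j ω = 1 := by
    intro j ω
    by_cases h : ω ∈ {ω | X j ω = 1} <;> simp [hχ_def, h]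
  -- key integral identity
  have key : ∫ ω, ∏ j ∈ J, (c * χ j ω + 1) ∂μ = ∏ j ∈ J, (c * p j + 1) := by
    have hexpand : ∀ ω, ∏ j ∈ J, (c * χ j ω + 1)
        = ∑ t ∈ J.powerset, c ^ t.card *
            Set.indicator (⋂ j ∈ (t:Finset ℕ), {ω' | X j ω' = 1}) (fun _ => (1:ℝ)) ω := by
      intro ω
      rw [Finset.prod_add]
      refine Finset.sum_congr rfl fun t ht => ?_
      rw [Finset.prod_const_one, mul_one, Finset.prod_mul_distrib, Finset.prod_const]
      congr 1
      by_cases h : ∀ j ∈ t, ω ∈ {ω' | X j ω' = 1}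
      · rw [Finset.prod_eq_one (fun j hj => by simp [hχ_def, h j hj]),
          Set.indicator_of_mem (by simpa [Set.mem_iInter] using h)]
      · push_neg at h
        obtain ⟨j, hj, hj'⟩ := h
        rw [Finset.prod_eq_zero hj (by simp [hχ_def, hj']),
          Set.indicator_of_notMem (by simp [Set.mem_iInter]; exact ⟨j, hj, hj'⟩)]
    simp_rw [hexpand]
    rw [integral_finset_sum]
    · have : ∀ t ∈ J.powerset, ∫ ω, c ^ t.card *
          Set.indicator (⋂ j ∈ (t:Finset ℕ), {ω' | X j ω' = 1}) (fun _ => (1:ℝ)) ω ∂μ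
          = ∏ j ∈ t, (c * p j) := by
        intro t ht
        simp only [← Pi.one_def]
        rw [integral_const_mul, integral_indicator_one
          (Finset.measurableSet_biInter t fun j _ => hBm j), measureReal_def,
          hind t (Finset.mem_powerset.mp ht), Finset.prod_mul_distrib, Finset.prod_const]
      rw [Finset.sum_congr rfl this, Finset.prod_add]
      refine Finset.sum_congr rfl fun t _ => by rw [Finset.prod_const_one, mul_one]
    · intro t ht
      exact (((integrable_indicator_iff
        (Finset.measurableSet_biInter t fun j _ => hBm j)).mpr
        integrableOn_const).const_mul _)
  have hprod_eq : ∀ ω, Real.exp (lam * ∑ j ∈ J, (X j ω : ℝ)) = ∏ j ∈ J, (c * χ j ω + 1) := by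
    intro ω
    rw [Finset.mul_sum, Real.exp_sum]
    refine Finset.prod_congr rfl fun j hj => ?_
    rcases Nat.le_one_iff_eq_zero_or_eq_one.mp (hX1 j ω) with h | h
    · have : ω ∉ {ω' | X j ω' = 1} := by simp [h]
      simp [hχ_def, Set.indicator_of_notMem this, h]
    · have : ω ∈ {ω' | X j ω' = 1} := h
      simp [hχ_def, Set.indicator_of_mem this, h, hc_def]
  have hSm : Measurable fun ω => ∑ j ∈ J, (X j ω : ℝ) :=
    Finset.measurable_sum _ fun j _ => measurable_from_top.comp (hXm j)
  have hAm : MeasurableSet {ω | a ≤ ∑ j ∈ J, (X j ω : ℝ)} :=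
    measurableSet_le measurable_const hSm
  have hSle : ∀ ω, (∑ j ∈ J, (X j ω : ℝ)) ≤ J.card := by
    intro ω
    calc (∑ j ∈ J, (X j ω : ℝ)) ≤ ∑ j ∈ J, 1 := by
          refine Finset.sum_le_sum fun j hj => ?_
          exact_mod_cast Nat.cast_le.mpr (hX1 j ω)
      _ = J.card := by simp
  have hint : Integrable (fun ω => Real.exp (lam * (∑ j ∈ J, (X j ω:ℝ)) - lam * a)) μ := by
    refine Integrable.mono' (integrable_const (Real.exp (lam * J.card - lam * a)))
      (((hSm.const_mul lam).sub measurable_const).exp).aestronglyMeasurable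
      (ae_of_all _ fun ω => ?_)
    rw [Real.norm_eq_abs, abs_of_pos (Real.exp_pos _)]
    exact Real.exp_le_exp.2 (by
      have := hSle ω
      have := mul_le_mul_of_nonneg_left (hSle ω) hlam
      linarith)
  have step1 : (μ {ω | a ≤ ∑ j ∈ J, (X j ω : ℝ)}).toReal
      ≤ ∫ ω, Real.exp (lam * (∑ j ∈ J, (X j ω:ℝ)) - lam * a) ∂μ := by
    rw [← measureReal_def, ← integral_indicator_one hAm]
    refine integral_mono ((integrable_indicator_iff hAm).mpr
      integrableOn_const) hint fun ω => ?_
    by_cases h : ω ∈ {ω' | a ≤ ∑ j ∈ J, (X j ω' : ℝ)}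
    · rw [Set.indicator_of_mem h]
      refine Real.one_le_exp ?_
      have : a ≤ ∑ j ∈ J, (X j ω : ℝ) := h
      nlinarith
    · rw [Set.indicator_of_notMem h]
      exact (Real.exp_pos _).le
  have step2 : ∫ ω, Real.exp (lam * (∑ j ∈ J, (X j ω:ℝ)) - lam * a) ∂μ
      = Real.exp (-(lam * a)) * ∏ j ∈ J, (c * p j + 1) := by
    rw [← key, ← integral_const_mul]
    refine integral_congr_ae (ae_of_all _ fun ω => ?_)
    show Real.exp (lam * (∑ j ∈ J, (X j ω:ℝ)) - lam * a)
      = Real.exp (-(lam * a)) * ∏ j ∈ J, (c * χ j ω + 1)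
    rw [← hprod_eq ω, ← Real.exp_add]
    congr 1
    ring
  have step3 : ∏ j ∈ J, (c * p j + 1) ≤ Real.exp (c * ∑ j ∈ J, p j) := by
    rw [Finset.mul_sum, Real.exp_sum]
    refine Finset.prod_le_prod (fun j hj => by have := hp j hj; nlinarith) (fun j hj => ?_)
    have := Real.add_one_le_exp (c * p j)
    linarith
  calc (μ {ω | a ≤ ∑ j ∈ J, (X j ω : ℝ)}).toReal
      ≤ Real.exp (-(lam * a)) * ∏ j ∈ J, (c * p j + 1) := by rw [← step2]; exact step1
    _ ≤ Real.exp (-(lam * a)) * Real.exp (c * ∑ j ∈ J, p j) :=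
        mul_le_mul_of_nonneg_left step3 (Real.exp_pos _).le
    _ = Real.exp (-lam * a + (Real.exp lam - 1) * ∑ j ∈ J, p j) := by
        rw [← Real.exp_add, hc_def]
        congr 1
        ring

/-- Under the conditional-expectation kernel, an `m`-measurable real function is a.e. constant. -/
lemma ae_condExpKernel_eq_self {Ω : Type*} {m : MeasurableSpace Ω}
    [mΩ : MeasurableSpace Ω] [StandardBorelSpace Ω]
    (P : Measure Ω) [IsProbabilityMeasure P] (hle : m ≤ mΩ)
    (g : Ω → ℝ) (hg : Measurable[m] g) :
    ∀ᵐ ω ∂P, condExpKernel P m ω {ω' | g ω' ≠ g ω} = 0 := by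
  classical
  set s : ℚ → Set Ω := fun q => {ω' | (q:ℝ) < g ω'} with hs_def
  have hs_m : ∀ q, MeasurableSet[m] (s q) := fun q => hg measurableSet_Ioi
  have hsm : ∀ q, MeasurableSet (s q) := fun q => hle _ (hs_m q)
  have hq : ∀ q : ℚ, ∀ᵐ ω ∂P, (condExpKernel P m ω (s q)).toReal
      = Set.indicator (s q) (fun _ => (1:ℝ)) ω := by
    intro q
    refine (condExpKernel_ae_eq_condExp hle (hsm q)).trans ?_
    rw [MeasureTheory.condExp_of_stronglyMeasurable hle
      ((stronglyMeasurable_const : StronglyMeasurable[m] fun _ : Ω => (1:ℝ)).indicator (hs_m q))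
      ((integrable_const (1:ℝ)).indicator (hsm q))]
  rw [← ae_all_iff] at hq
  filter_upwards [hq] with ω hω
  have h1 : ∀ q : ℚ, g ω ≤ (q:ℝ) → condExpKernel P m ω (s q) = 0 := by
    intro q hgq
    have h0 : (condExpKernel P m ω (s q)).toReal = 0 := by
      rw [hω q, Set.indicator_of_notMem]
      simp only [hs_def, Set.mem_setOf_eq, not_lt]
      exact hgq
    rcases ENNReal.toReal_eq_zero_iff _ |>.mp h0 with h | h
    · exact h
    · exact absurd h (measure_ne_top _ _)
  have h2 : ∀ q : ℚ, (q:ℝ) < g ω → condExpKernel P m ω ((s q)ᶜ) = 0 := by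
    intro q hgq
    have h0 : condExpKernel P m ω (s q) = 1 := by
      rw [← ENNReal.ofReal_toReal (measure_ne_top _ _), hω q,
        Set.indicator_of_mem (by exact hgq)]
      simp
    rw [measure_compl (hsm q) (measure_ne_top _ _), h0, measure_univ, tsub_self]
  have hsub : {ω' | g ω' ≠ g ω} ⊆
      (⋃ q : ℚ, {ω' | (q:ℝ) < g ω' ∧ g ω ≤ (q:ℝ)}) ∪
      (⋃ q : ℚ, {ω' | g ω' ≤ (q:ℝ) ∧ (q:ℝ) < g ω}) := by
    intro ω' hω'
    rcases lt_or_gt_of_ne (hω' : g ω' ≠ g ω) with h | h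
    · obtain ⟨q, hq1, hq2⟩ := exists_rat_btwn h
      exact Or.inr (Set.mem_iUnion.mpr ⟨q, hq1.le, hq2⟩)
    · obtain ⟨q, hq1, hq2⟩ := exists_rat_btwn h
      exact Or.inl (Set.mem_iUnion.mpr ⟨q, hq2, hq1.le⟩)
  refine measure_mono_null hsub (measure_union_null ?_ ?_)
  · refine measure_iUnion_null fun q => ?_
    by_cases h : g ω ≤ (q:ℝ)
    · refine measure_mono_null (fun ω' hω' => ?_) (h1 q h)
      exact hω'.1
    · have : {ω' | (q:ℝ) < g ω' ∧ g ω ≤ (q:ℝ)} = ∅ := by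
        ext ω'; simp only [Set.mem_setOf_eq, Set.mem_empty_iff_false, iff_false]
        exact fun hh => h hh.2
      simp [this]
  · refine measure_iUnion_null fun q => ?_
    by_cases h : (q:ℝ) < g ω
    · refine measure_mono_null (fun ω' hω' => ?_) (h2 q h)
      simp only [hs_def, Set.mem_compl_iff, Set.mem_setOf_eq, not_lt]
      exact hω'.1
    · have : {ω' | g ω' ≤ (q:ℝ) ∧ (q:ℝ) < g ω} = ∅ := by
        ext ω'; simp only [Set.mem_setOf_eq, Set.mem_empty_iff_false, iff_false]
        exact fun hh => h hh.2
      simp [this]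

set_option maxHeartbeats 3200000 in
theorem stmt12 [StandardBorelSpace Ω]
    (F : ℝ → ℝ) (hF : IsCDF F) (α : ℝ) (hα : 2 < α) (hRV : CondRV F α)
    (P : Measure Ω) [IsProbabilityMeasure P] (W : ℕ → Ω → ℝ) (Wo : ℕ → ℕ → Ω → ℝ)
    (hW : IIDWith P F W) (hWo : IsOrderStats W Wo)
    (A : ℕ → ℕ → ℕ → Ω → ℕ) (D : ℕ → ℕ → Ω → ℕ) (hCL : ChungLu P W Wo A D) :
    Tendsto (fun n : ℕ => P {ω | ∀ i ∈ Finset.Icc 1 n,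
        (D n i ω : ℝ) < Wo n i ω
          + max (Real.sqrt (4 * Real.log n * Wo n i ω)) (4 * Real.log n)})
      atTop (nhds 1) := by
  classical
  obtain ⟨hWm, _hWindep, hWcdf⟩ := hW
  obtain ⟨hWom, _hWomono, hWoperm⟩ := hWo
  obtain ⟨hAm, hA1, hAsymm, hD, hAind, hAcond⟩ := hCL
  set c₀ : ℝ := 12 - 4 * Real.exp 1 with hc₀_def
  have he2 : 2 ≤ Real.exp 1 := by nlinarith [Real.exp_one_gt_d9]
  have hc₀1 : 1 < c₀ := by rw [hc₀_def]; nlinarith [Real.exp_one_lt_d9]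
  have hc₀27 : c₀ ≤ 27/22 := by rw [hc₀_def]; nlinarith [Real.exp_one_gt_d9]
  have hDmeas : ∀ n i, Measurable (D n i) := by
    intro n i
    have : D n i = fun ω => ∑ j ∈ Finset.Icc 1 n, A n i j ω := funext fun ω => hD n i ω
    rw [this]
    exact Finset.measurable_sum _ fun j _ => hAm n i j
  have hthm : ∀ n i, Measurable fun ω => Wo n i ω
      + max (Real.sqrt (4 * Real.log n * Wo n i ω)) (4 * Real.log n) := fun n i =>
    (hWom n i).add (((Real.continuous_sqrt.measurable).comp
      (measurable_const.mul (hWom n i))).max measurable_const)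
  set good : ℕ → Set Ω := fun n => {ω | ∀ i ∈ Finset.Icc 1 n,
      (D n i ω : ℝ) < Wo n i ω
        + max (Real.sqrt (4 * Real.log n * Wo n i ω)) (4 * Real.log n)} with hgood_def
  have hgoodm : ∀ n, MeasurableSet (good n) := by
    intro n
    have : good n = ⋂ i ∈ Finset.Icc 1 n, {ω | (D n i ω : ℝ) < Wo n i ω
        + max (Real.sqrt (4 * Real.log n * Wo n i ω)) (4 * Real.log n)} := by
      ext ω; simp [hgood_def]
    rw [this]
    exact MeasurableSet.biInter (Finset.Icc 1 n).countable_toSet fun i _ =>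
      measurableSet_lt (measurable_from_top.comp (hDmeas n i)) (hthm n i)
  have key : ∀ n : ℕ, 2 ≤ n →
      P (good n)ᶜ ≤ ENNReal.ofReal ((n:ℝ) * Real.exp (-c₀ * Real.log n)) := by
    intro n hn
    have hn1 : (1:ℝ) < (n:ℝ) := by exact_mod_cast hn.trans_lt' one_lt_two
    have hlogn : 0 < Real.log n := Real.log_pos hn1
    have hle : weightSigma Wo n ≤ mΩ := by
      rintro s ⟨t, ht, rfl⟩
      exact (measurable_pi_lambda (fun ω (k : Fin n) => Wo n ((k:ℕ)+1) ω)
        (fun k => hWom n ((k:ℕ)+1))) ht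
    set B : ℕ → Set Ω := fun i => {ω | Wo n i ω
        + max (Real.sqrt (4 * Real.log n * Wo n i ω)) (4 * Real.log n) ≤ (D n i ω : ℝ)}
      with hB_def
    have hBmeas : ∀ i, MeasurableSet (B i) := fun i =>
      measurableSet_le (hthm n i) (measurable_from_top.comp (hDmeas n i))
    have hsub : (good n)ᶜ ⊆ ⋃ i ∈ Finset.Icc 1 n, B i := by
      intro ω hω
      simp only [hgood_def, Set.mem_compl_iff, Set.mem_setOf_eq, not_forall, not_lt] at hω
      obtain ⟨i, hi, hge⟩ := hω
      exact Set.mem_biUnion hi hge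
    have perI : ∀ i ∈ Finset.Icc 1 n,
        P (B i) ≤ ENNReal.ofReal (Real.exp (-c₀ * Real.log n)) := by
      intro i hi
      obtain ⟨hi1, hin⟩ := Finset.mem_Icc.mp hi
      -- `Wo n i` is measurable with respect to the weight σ-algebra
      have hWo_m : Measurable[weightSigma Wo n] (Wo n i) := by
        have heq : Wo n i = (fun v : Fin n → ℝ => v ⟨i-1, by omega⟩) ∘
            (fun ω (k : Fin n) => Wo n ((k:ℕ)+1) ω) := by
          funext ω
          simp only [Function.comp_apply]
          rw [Nat.sub_add_cancel hi1]
        rw [heq]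
        exact (measurable_pi_apply _).comp (comap_measurable _)
      -- a.e. positivity of the weights
      have hpos : ∀ᵐ ω ∂P, ∀ l ∈ Finset.Icc 1 n, 0 < W l ω := by
        rw [Finset.eventually_all]
        intro l _
        have h0 : P {ω | W l ω ≤ 0} = 0 := by
          rw [hWcdf l 0, hF.2.2.1 0 le_rfl, ENNReal.ofReal_zero]
        rw [ae_iff]
        convert h0 using 2
        ext ω; simp [not_lt]
      -- conditional success probabilities
      have hkerp : ∀ᵐ ω ∂P, ∀ j ∈ Finset.Icc 1 n,
          (condExpKernel P (weightSigma Wo n) ω {ω' | A n i j ω' = 1}).toReal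
            = min (Wo n i ω * Wo n j ω / (∑ l ∈ Finset.Icc 1 n, W l ω)) 1 := by
        rw [Finset.eventually_all]
        intro j hj
        have hmeasA : MeasurableSet {ω' | A n i j ω' = 1} := hAm n i j (measurableSet_singleton 1)
        rcases le_or_gt i j with hij | hij
        · exact (condExpKernel_ae_eq_condExp hle hmeasA).trans (hAcond n i hi j hj hij)
        · have hset : {ω' | A n i j ω' = 1} = {ω' | A n j i ω' = 1} := by
            ext ω'; rw [Set.mem_setOf_eq, Set.mem_setOf_eq, hAsymm n j i ω']
          have h' := (condExpKernel_ae_eq_condExp hle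
            (hAm n j i (measurableSet_singleton 1))).trans (hAcond n j hj i hi hij.le)
          filter_upwards [h'] with ω hω
          rw [hset, show {ω' | A n j i ω' = 1} = A n j i ⁻¹' {1} from rfl, ← measureReal_def, hω,
            mul_comm (Wo n j ω) (Wo n i ω)]
      -- conditional independence along row i
      have hkerind : ∀ᵐ ω ∂P, ∀ S ∈ (Finset.Icc 1 n).powerset,
          condExpKernel P (weightSigma Wo n) ω (⋂ j ∈ S, {ω' | A n i j ω' = 1})
            = ∏ j ∈ S, condExpKernel P (weightSigma Wo n) ω {ω' | A n i j ω' = 1} := by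
        rw [Finset.eventually_all]
        intro S hS
        have hSsub := Finset.mem_powerset.mp hS
        set φ : {x // x ∈ S} → {p : ℕ × ℕ // p.1 ∈ Finset.Icc 1 n ∧ p.2 ∈ Finset.Icc 1 n ∧ p.1 ≤ p.2} :=
          fun x => if h : i ≤ x.1 then ⟨(i, x.1), hi, hSsub x.2, h⟩
            else ⟨(x.1, i), hSsub x.2, hi, le_of_not_ge h⟩ with hφ_def
        have hφval : ∀ (x : {x // x ∈ S}) (ω' : Ω),
            (A n (φ x).1.1 (φ x).1.2 ω' = 1) ↔ (A n i x.1 ω' = 1) := by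
          intro x ω'
          by_cases h : i ≤ x.1
          · simp [hφ_def, h]
          · simp only [hφ_def, h, dite_false]
            rw [hAsymm n i x.1 ω']
        have hφinj : Function.Injective φ := by
          intro x y hxy
          have hx2 : 1 ≤ (x : ℕ) := (Finset.mem_Icc.mp (hSsub x.2)).1
          have hy2 : 1 ≤ (y : ℕ) := (Finset.mem_Icc.mp (hSsub y.2)).1
          apply Subtype.ext
          by_cases hx : i ≤ x.1 <;> by_cases hy : i ≤ y.1 <;>
            simp only [hφ_def, hx, hy, dite_true, dite_false, Subtype.mk.injEq,
              Prod.mk.injEq] at hxy <;> omega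
        have hkey := (Kernel.iIndepFun_iff_measure_inter_preimage_eq_mul _ _).mp
          ((hAind n hle) : Kernel.iIndepFun _ _ _)
          (S.attach.image φ) (sets := fun _ => ({1} : Set ℕ))
          (fun _ _ => measurableSet_singleton 1)
        have hkey' := ae_of_ae_trim hle hkey
        filter_upwards [hkey'] with ω hω
        have hInter : (⋂ p ∈ S.attach.image φ,
            (fun ω' => A n (p:{p : ℕ × ℕ // p.1 ∈ Finset.Icc 1 n ∧ p.2 ∈ Finset.Icc 1 n ∧ p.1 ≤ p.2}).1.1 (p:{p : ℕ × ℕ // _ ∧ _ ∧ _}).1.2 ω') ⁻¹' {1})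
            = ⋂ j ∈ S, {ω' | A n i j ω' = 1} := by
          ext ω'
          simp only [Set.mem_iInter, Finset.mem_image, Finset.mem_attach, true_and,
            Set.mem_preimage, Set.mem_singleton_iff, Set.mem_setOf_eq]
          constructor
          · intro h j hj
            exact (hφval ⟨j, hj⟩ ω').mp (h (φ ⟨j, hj⟩) ⟨⟨j, hj⟩, rfl⟩)
          · rintro h p ⟨x, rfl⟩
            exact (hφval x ω').mpr (h x.1 x.2)
        have hProd : (∏ p ∈ S.attach.image φ, condExpKernel P (weightSigma Wo n) ω
              ((fun ω' => A n p.1.1 p.1.2 ω') ⁻¹' {1}))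
            = ∏ j ∈ S, condExpKernel P (weightSigma Wo n) ω {ω' | A n i j ω' = 1} := by
          rw [Finset.prod_image (fun x _ y _ h => hφinj h)]
          rw [← Finset.prod_attach S (fun j => condExpKernel P (weightSigma Wo n) ω
            {ω' | A n i j ω' = 1})]
          refine Finset.prod_congr rfl fun x _ => ?_
          congr 1
          ext ω'
          simpa using hφval x ω'
        rw [← hInter, ← hProd]
        exact hω
      -- constancy of `Wo n i` under the kernel
      have hkerconst := ae_condExpKernel_eq_self P hle (Wo n i) hWo_m
      -- the a.e. pointwise bound
      have hae : ∀ᵐ ω ∂P, (condExpKernel P (weightSigma Wo n) ω (B i)).toReal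
          ≤ Real.exp (-c₀ * Real.log n) := by
        filter_upwards [hpos, hkerp, hkerind, hkerconst] with ω h1 h2 h3 h4
        set κω := condExpKernel P (weightSigma Wo n) ω with hκω_def
        set Wi := Wo n i ω with hWi_def
        set Lr := ∑ l ∈ Finset.Icc 1 n, W l ω with hLr_def
        set pr : ℕ → ℝ := fun j => min (Wo n i ω * Wo n j ω / Lr) 1 with hpr_def
        -- positivity facts
        have hWopos : ∀ j ∈ Finset.Icc 1 n, 0 < Wo n j ω := by
          intro j hj
          have hmem : Wo n j ω ∈ (Finset.Icc 1 n).val.map (fun l => Wo n l ω) :=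
            Multiset.mem_map_of_mem _ (Finset.mem_def.mp hj)
          rw [hWoperm n ω] at hmem
          obtain ⟨l, hl, hval⟩ := Multiset.mem_map.mp hmem
          rw [← hval]
          exact h1 l (Finset.mem_def.mpr hl)
        have hWipos : 0 < Wi := hWopos i hi
        have hLpos : 0 < Lr :=
          Finset.sum_pos (fun l hl => h1 l hl) ⟨1, Finset.mem_Icc.mpr ⟨le_rfl, by omega⟩⟩
        have hsumWo : ∑ j ∈ Finset.Icc 1 n, Wo n j ω = Lr := by
          rw [hLr_def, Finset.sum, Finset.sum, hWoperm n ω]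
        have hprnn : ∀ j ∈ Finset.Icc 1 n, 0 ≤ pr j := by
          intro j hj
          have := hWopos j hj
          exact le_min (by positivity) zero_le_one
        have hsum0 : 0 ≤ ∑ j ∈ Finset.Icc 1 n, pr j := Finset.sum_nonneg hprnn
        have hptot : ∑ j ∈ Finset.Icc 1 n, pr j ≤ Wi := by
          calc ∑ j ∈ Finset.Icc 1 n, pr j
              ≤ ∑ j ∈ Finset.Icc 1 n, Wo n i ω * Wo n j ω / Lr :=
                Finset.sum_le_sum fun j _ => min_le_left _ _
            _ = Wo n i ω * (∑ j ∈ Finset.Icc 1 n, Wo n j ω) / Lr := by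
                rw [Finset.mul_sum, Finset.sum_div]
            _ = Wi := by rw [hsumWo, hWi_def]; field_simp
        -- Chernoff hypotheses
        have hind : ∀ S ⊆ Finset.Icc 1 n,
            (κω (⋂ j ∈ S, {ω' | A n i j ω' = 1})).toReal = ∏ j ∈ S, pr j := by
          intro S hS
          rw [h3 S (Finset.mem_powerset.mpr hS), ENNReal.toReal_prod]
          exact Finset.prod_congr rfl fun j hj => h2 j (hS hj)
        set τ : ℝ := Wi + max (Real.sqrt (4 * Real.log n * Wi)) (4 * Real.log n) with hτ_def
        have hch : ∀ lam : ℝ, 0 ≤ lam →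
            (κω {ω' | τ ≤ ∑ j ∈ Finset.Icc 1 n, (A n i j ω' : ℝ)}).toReal
              ≤ Real.exp (-lam * τ + (Real.exp lam - 1) * ∑ j ∈ Finset.Icc 1 n, pr j) :=
          fun lam hl => bernoulli_chernoff κω (Finset.Icc 1 n) (fun j => A n i j)
            (fun j => hAm n i j) (fun j ω' => hA1 n i j ω') pr hind τ lam hl
        -- reduce B i to the constant-threshold event
        have hκB : (κω (B i)).toReal
            ≤ (κω {ω' | τ ≤ ∑ j ∈ Finset.Icc 1 n, (A n i j ω' : ℝ)}).toReal := by
          refine ENNReal.toReal_mono (measure_ne_top _ _) ?_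
          have hsubC : B i ⊆ {ω' | τ ≤ ∑ j ∈ Finset.Icc 1 n, (A n i j ω' : ℝ)}
              ∪ {ω' | Wo n i ω' ≠ Wi} := by
            intro ω' hω'
            by_cases h : Wo n i ω' = Wi
            · left
              have hb : Wo n i ω' + max (Real.sqrt (4 * Real.log n * Wo n i ω'))
                  (4 * Real.log n) ≤ (D n i ω' : ℝ) := hω'
              rw [h] at hb
              have hcast : (D n i ω' : ℝ) = ∑ j ∈ Finset.Icc 1 n, (A n i j ω' : ℝ) := by
                rw [hD n i ω']
                push_cast
                rfl
              rw [hcast] at hb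
              exact hb
            · exact Or.inr h
          calc κω (B i) ≤ κω ({ω' | τ ≤ ∑ j ∈ Finset.Icc 1 n, (A n i j ω' : ℝ)}
                ∪ {ω' | Wo n i ω' ≠ Wi}) := measure_mono hsubC
            _ ≤ κω {ω' | τ ≤ ∑ j ∈ Finset.Icc 1 n, (A n i j ω' : ℝ)}
                + κω {ω' | Wo n i ω' ≠ Wi} := measure_union_le _ _
            _ = κω {ω' | τ ≤ ∑ j ∈ Finset.Icc 1 n, (A n i j ω' : ℝ)} := by
                rw [h4, add_zero]
        -- numeric estimates
        rcases le_or_gt Wi (4 * Real.log n) with hcase | hcase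
        · -- small weight: use lam = 1
          refine hκB.trans ((hch 1 zero_le_one).trans ?_)
          rw [Real.exp_le_exp]
          have hτge : Wi + 4 * Real.log n ≤ τ := by
            rw [hτ_def]
            have := le_max_right (Real.sqrt (4 * Real.log n * Wi)) (4 * Real.log n)
            linarith
          have q1 : (Real.exp 1 - 1) * (∑ j ∈ Finset.Icc 1 n, pr j)
              ≤ (Real.exp 1 - 1) * Wi :=
            mul_le_mul_of_nonneg_left hptot (by linarith)
          have q2 : (Real.exp 1 - 2) * Wi ≤ (Real.exp 1 - 2) * (4 * Real.log n) :=
            mul_le_mul_of_nonneg_left hcase (by linarith)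
          rw [hc₀_def]
          nlinarith [hτge, q1, q2]
        · -- large weight: use lam = 9 t / (22 Wi)
          obtain ⟨t, ht_def⟩ : ∃ t : ℝ, t = Real.sqrt (4 * Real.log n * Wi) := ⟨_, rfl⟩
          have ht2 : t^2 = 4 * Real.log n * Wi := by
            rw [ht_def]; exact Real.sq_sqrt (by positivity)
          have htpos : 0 < t := by
            rw [ht_def]; exact Real.sqrt_pos.mpr (by positivity)
          have htW : t ≤ Wi := by
            have h' : t ≤ Real.sqrt (Wi * Wi) := by
              rw [ht_def]
              exact Real.sqrt_le_sqrt (by nlinarith)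
            rwa [Real.sqrt_mul_self hWipos.le] at h'
          have htβ : 4 * Real.log n ≤ t := by
            have h' : Real.sqrt ((4 * Real.log n) * (4 * Real.log n)) ≤ t := by
              rw [ht_def]
              exact Real.sqrt_le_sqrt (by nlinarith)
            rwa [Real.sqrt_mul_self (by positivity)] at h'
          obtain ⟨lam, hlam_def⟩ : ∃ lam : ℝ, lam = 9 * t / (22 * Wi) := ⟨_, rfl⟩
          have hlam0 : 0 ≤ lam := by
            rw [hlam_def]
            exact div_nonneg (by linarith) (by linarith)
          have hlamhalf : lam ≤ 1/2 := by
            rw [hlam_def, div_le_iff₀ (by linarith)]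
            linarith
          have hexp : Real.exp lam ≤ 1 + lam + (11/18)*lam^2 := by
            have h := Real.exp_bound' hlam0 (by linarith) (n := 3) (by norm_num)
            simp only [Finset.sum_range_succ, Finset.sum_range_zero, Nat.factorial] at h
            norm_num at h
            nlinarith [h, sq_nonneg lam, hlam0, hlamhalf]
          refine hκB.trans ((hch lam hlam0).trans ?_)
          rw [Real.exp_le_exp]
          have hτge : Wi + t ≤ τ := by
            rw [hτ_def, ht_def]
            have := le_max_left (Real.sqrt (4 * Real.log n * Wi)) (4 * Real.log n)
            linarith
          have q1 : (Real.exp lam - 1) * (∑ j ∈ Finset.Icc 1 n, pr j)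
              ≤ (lam + (11/18)*lam^2) * Wi := by
            have q1a : Real.exp lam - 1 ≤ lam + (11/18)*lam^2 := by linarith
            have q1b : (Real.exp lam - 1) * (∑ j ∈ Finset.Icc 1 n, pr j)
                ≤ (lam + (11/18)*lam^2) * (∑ j ∈ Finset.Icc 1 n, pr j) :=
              mul_le_mul_of_nonneg_right q1a hsum0
            have q1c : (lam + (11/18)*lam^2) * (∑ j ∈ Finset.Icc 1 n, pr j)
                ≤ (lam + (11/18)*lam^2) * Wi :=
              mul_le_mul_of_nonneg_left hptot (by positivity)
            linarith
          have hq2 : -lam * τ ≤ -lam * (Wi + t) := by nlinarith [hτge, hlam0]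
          have hc : lam * t = 9 * (4 * Real.log n) / 22 := by
            rw [hlam_def]
            field_simp
            nlinarith [ht2]
          have hd : lam^2 * Wi = 81 * (4 * Real.log n) / 484 := by
            rw [hlam_def]
            field_simp
            nlinarith [ht2]
          have hfin2 : -(27/22) * Real.log n ≤ -c₀ * Real.log n := by
            nlinarith [hc₀27, hlogn.le]
          nlinarith [q1, hq2, hc, hd, hfin2]
      -- integrate
      have hBi_meas := hBmeas i
      have hInd_int : Integrable (Set.indicator (B i) fun _ => (1:ℝ)) P :=
        (integrable_const 1).indicator hBi_meas
      have e1 : (P (B i)).toReal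
          = ∫ ω, (condExpKernel P (weightSigma Wo n) ω (B i)).toReal ∂P := by
        rw [← measureReal_def, ← integral_indicator_one hBi_meas]
        have e2 : ∫ ω, Set.indicator (B i) (fun _ => (1:ℝ)) ω ∂P
            = ∫ ω, (P[Set.indicator (B i) (fun _ => (1:ℝ)) | weightSigma Wo n]) ω ∂P :=
          (integral_condExp hle).symm
        rw [show (Set.indicator (B i) (1 : Ω → ℝ)) = Set.indicator (B i) (fun _ => (1:ℝ)) from rfl, e2]
        refine integral_congr_ae ((condExp_ae_eq_integral_condExpKernel hle hInd_int).trans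
          (ae_of_all _ fun ω => ?_))
        simp only [← Pi.one_def]
        exact integral_indicator_one hBi_meas
      have hfin : (P (B i)).toReal ≤ Real.exp (-c₀ * Real.log n) := by
        rw [e1]
        calc ∫ ω, (condExpKernel P (weightSigma Wo n) ω (B i)).toReal ∂P
            ≤ ∫ _ω, Real.exp (-c₀ * Real.log n) ∂P :=
              integral_mono_ae (integrable_toReal_condExpKernel hBi_meas)
                (integrable_const _) hae
          _ = Real.exp (-c₀ * Real.log n) := by simp
      rw [← ENNReal.ofReal_toReal (measure_ne_top P (B i))]
      exact ENNReal.ofReal_le_ofReal hfin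
    calc P (good n)ᶜ ≤ P (⋃ i ∈ Finset.Icc 1 n, B i) := measure_mono hsub
      _ ≤ ∑ i ∈ Finset.Icc 1 n, P (B i) := measure_biUnion_finset_le _ _
      _ ≤ ∑ _i ∈ Finset.Icc 1 n, ENNReal.ofReal (Real.exp (-c₀ * Real.log n)) :=
          Finset.sum_le_sum perI
      _ = (n : ℝ≥0∞) * ENNReal.ofReal (Real.exp (-c₀ * Real.log n)) := by
          rw [Finset.sum_const, Nat.card_Icc]
          simp [nsmul_eq_mul]
      _ = ENNReal.ofReal ((n:ℝ) * Real.exp (-c₀ * Real.log n)) := by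
          rw [ENNReal.ofReal_mul (by positivity), ENNReal.ofReal_natCast]
  -- limit of the bound
  have hlim0 : Tendsto (fun n : ℕ => (n:ℝ) * Real.exp (-c₀ * Real.log n)) atTop (nhds 0) := by
    have h1 : Tendsto (fun x : ℝ => x ^ ((1:ℝ) - c₀)) atTop (nhds 0) := by
      have := tendsto_rpow_neg_atTop (y := c₀ - 1) (by linarith)
      simpa [neg_sub] using this
    have h2 : Tendsto (fun n : ℕ => ((n:ℝ)) ^ ((1:ℝ) - c₀)) atTop (nhds 0) :=
      h1.comp tendsto_natCast_atTop_atTop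
    refine h2.congr' ?_
    filter_upwards [eventually_ge_atTop 1] with n hn
    have hnpos : (0:ℝ) < n := by exact_mod_cast hn
    rw [Real.rpow_def_of_pos hnpos]
    rw [show Real.log n * (1 - c₀) = Real.log n + (-c₀ * Real.log n) by ring,
      Real.exp_add, Real.exp_log hnpos]
  have hPbad : Tendsto (fun n => P (good n)ᶜ) atTop (nhds 0) := by
    have h0 : Tendsto (fun n : ℕ => ENNReal.ofReal ((n:ℝ) * Real.exp (-c₀ * Real.log n)))
        atTop (nhds 0) := by
      rw [← ENNReal.ofReal_zero]
      exact ENNReal.tendsto_ofReal hlim0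
    exact tendsto_of_tendsto_of_tendsto_of_le_of_le' tendsto_const_nhds h0
      (Eventually.of_forall fun n => zero_le)
      (eventually_atTop.mpr ⟨2, key⟩)
  have hrw : (fun n : ℕ => P (good n)) = fun n => 1 - P (good n)ᶜ := by
    funext n
    rw [measure_compl (hgoodm n) (measure_ne_top _ _), measure_univ]
    exact (ENNReal.sub_sub_cancel ENNReal.one_ne_top prob_le_one).symm
  show Tendsto (fun n : ℕ => P (good n)) atTop (nhds 1)
  rw [hrw]
  have hcont := (ENNReal.continuous_sub_left ENNReal.one_ne_top).continuousAt (x := (0:ℝ≥0∞))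
  have := hcont.tendsto.comp hPbad
  simpa [Function.comp_def] using this

end
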